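/- Let gl_n(K) be the matrix Lie algebra over a field K of characteristic zero. For every even k ≥ 2, the alternating k-cochain φ_k(A_1 ∧ ⋯ ∧ A_k) = Σ_{s ∈ S_k} sgn(s) tr(A_{s(1)} ⋯ A_{s(k)}) is identically zero; for every odd k, φ_k is a Chevalley–Eilenberg k-cocycle on gl_n(K) with trivial coefficients K. -/

import Mathlib

/-!
STATEMENT 15: Let `gl_n(K)` be the matrix Lie algebra over a field `K` of
characteristic zero. For every even `k ≥ 2`, the alternating `k`-cochain
`φ_k(A_1 ∧ ⋯ ∧ A_k) = Σ_{s ∈ S_k} sgn(s) tr(A_{s(1)} ⋯ A_{s(k)})`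
is identically zero; for every odd `k`, `φ_k` is a Chevalley–Eilenberg
`k`-cocycle on `gl_n(K)` with trivial coefficients `K`, i.e.
`Σ_{i<j} (−1)^{i+j} φ_k([x_i,x_j], x_0, …, x̌_i, …, x̌_j, …, x_k) = 0`.
-/

/-- The standard primitive cochain
`φ_k(A_1, …, A_k) = Σ_{s ∈ S_k} sgn(s) · tr(A_{s(1)} ⋯ A_{s(k)})`. -/
noncomputable def phiCochain {K : Type*} [Field K] (n k : ℕ)
    (x : Fin k → Matrix (Fin n) (Fin n) K) : K :=
  ∑ s : Equiv.Perm (Fin k),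
    ((Equiv.Perm.sign s : ℤ) : K) * ((List.ofFn fun i => x (s i)).prod).trace

set_option linter.unusedSectionVars false

section helpers
variable {α : Type*} [Monoid α]

lemma ofFn_update_eq_set {k : ℕ} (a : Fin k → α) (i : Fin k) (c : α) :
    List.ofFn (Function.update a i c) = (List.ofFn a).set i c := by
  apply List.ext_getElem
  · simp
  · intro t h1 h2
    simp only [List.getElem_ofFn, List.getElem_set, Function.update_apply]
    simp only [List.length_ofFn] at h1
    by_cases ht : t = (i : ℕ)
    · simp [ht, Fin.ext_iff]
    · rw [if_neg (by simp [Fin.ext_iff, ht]), if_neg (fun h => ht h.symm)]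

lemma prod_ofFn_update {k : ℕ} (a : Fin k → α) (i : Fin k) (c : α) :
    (List.ofFn (Function.update a i c)).prod
      = ((List.ofFn a).take i).prod * c * ((List.ofFn a).drop (i + 1)).prod := by
  rw [ofFn_update_eq_set, List.prod_set, if_pos (by simp [i.isLt])]

end helpers

section phi
variable {K : Type*} [Field K] {n : ℕ}

local notation "M" => Matrix (Fin n) (Fin n) K

lemma phi_update_sub {k : ℕ} (a : Fin k → M) (i : Fin k) (c d : M) :
    phiCochain n k (Function.update a i (c - d))
      = phiCochain n k (Function.update a i c) - phiCochain n k (Function.update a i d) := by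
  unfold phiCochain
  rw [← Finset.sum_sub_distrib]
  refine Finset.sum_congr rfl fun s _ => ?_
  have h : ∀ e : M, (List.ofFn fun p => Function.update a i e (s p))
      = List.ofFn (Function.update (a ∘ s) (s.symm i) e) := by
    intro e
    congr 1
    funext p
    exact Function.update_apply_equiv_apply a s i e p
  simp only [h, prod_ofFn_update, mul_sub, sub_mul, Matrix.trace_sub]

lemma phi_update_neg_flip {k : ℕ} (a : Fin k → M) (i : Fin k) (c d : M) :
    phiCochain n k (Function.update a i (c - d))
      = - phiCochain n k (Function.update a i (d - c)) := by
  rw [phi_update_sub, phi_update_sub]; ring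

lemma phi_comp_perm {k : ℕ} (a : Fin k → M) (σ : Equiv.Perm (Fin k)) :
    phiCochain n k (a ∘ σ) = ((Equiv.Perm.sign σ : ℤ) : K) * phiCochain n k a := by
  unfold phiCochain
  rw [Finset.mul_sum]
  rw [← Equiv.sum_comp (Equiv.mulLeft σ)
    (fun s => ((Equiv.Perm.sign σ : ℤ) : K) * (((Equiv.Perm.sign s : ℤ) : K) *
      ((List.ofFn fun i => a (s i)).prod).trace))]
  refine Finset.sum_congr rfl fun s _ => ?_
  have h1 : Equiv.Perm.sign (Equiv.mulLeft σ s) = Equiv.Perm.sign σ * Equiv.Perm.sign s := by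
    simp [Equiv.coe_mulLeft, map_mul]
  have h2 : ∀ i, (Equiv.mulLeft σ s) i = σ (s i) := fun i => rfl
  have h3 : ((Equiv.Perm.sign σ : ℤ) : K) * ((Equiv.Perm.sign σ : ℤ) : K) = 1 := by
    rcases Int.units_eq_one_or (Equiv.Perm.sign σ) with h | h <;> simp [h]
  rw [h1]
  push_cast
  simp only [h2, Function.comp_apply]
  set u : K := ((Equiv.Perm.sign σ : ℤ) : K)
  set v : K := ((Equiv.Perm.sign s : ℤ) : K)
  set t : K := ((List.ofFn fun i => a (σ (s i))).prod).trace
  linear_combination (-(v*t)) * h3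

end phi

section phi2
variable {K : Type*} [Field K] {n : ℕ}
local notation "M" => Matrix (Fin n) (Fin n) K

lemma inv_trace {k : ℕ} (b : Fin k → M) (y : M) :
    ∑ i : Fin k,
      ((List.ofFn (Function.update b i (y * b i - b i * y))).prod).trace = 0 := by
  set l := List.ofFn b with hl
  have hlen : l.length = k := by simp [hl]
  set f : ℕ → K := fun t => ((l.take t).prod * y * (l.drop t).prod).trace with hf
  have hterm : ∀ i : Fin k,
      ((List.ofFn (Function.update b i (y * b i - b i * y))).prod).trace
        = f (i : ℕ) - f ((i : ℕ) + 1) := by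
    intro i
    have hi : (i : ℕ) < l.length := by rw [hlen]; exact i.isLt
    have hgi : l[(i : ℕ)] = b i := by
      simp [hl, List.getElem_ofFn]
    have hdrop : l.drop (i : ℕ) = b i :: l.drop ((i : ℕ) + 1) := by
      rw [List.drop_eq_getElem_cons hi, hgi]
    have htake : (l.take ((i : ℕ) + 1)).prod = (l.take (i : ℕ)).prod * b i := by
      rw [List.prod_take_succ l (i : ℕ) hi, hgi]
    rw [prod_ofFn_update, ← hl]
    have e1 : (l.take (i : ℕ)).prod * (y * b i - b i * y) * (l.drop ((i : ℕ) + 1)).prod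
        = (l.take (i : ℕ)).prod * y * (l.drop (i : ℕ)).prod
          - (l.take ((i : ℕ) + 1)).prod * y * (l.drop ((i : ℕ) + 1)).prod := by
      rw [hdrop, List.prod_cons, htake]
      noncomm_ring
    rw [e1, Matrix.trace_sub, hf]
  rw [Finset.sum_congr rfl (fun i _ => hterm i),
    Fin.sum_univ_eq_sum_range (fun t => f t - f (t + 1)) k, Finset.sum_range_sub' f k]
  have h0 : l.take 0 = [] := rfl
  have hdk : l.drop k = [] := by simp [hlen]
  have htk : l.take k = l := by rw [← hlen]; exact List.take_length
  rw [hf]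
  simp only [h0, hdk, htk, List.drop_zero, List.prod_nil]
  rw [mul_one, one_mul, Matrix.trace_mul_comm, sub_self]

lemma phi_inv {k : ℕ} (a : Fin k → M) (y : M) :
    ∑ m : Fin k, phiCochain n k (Function.update a m (y * a m - a m * y)) = 0 := by
  unfold phiCochain
  rw [Finset.sum_comm]
  refine Finset.sum_eq_zero fun s _ => ?_
  have h : ∀ (m : Fin k) (c : M), (List.ofFn fun p => Function.update a m c (s p))
      = List.ofFn (Function.update (a ∘ s) (s.symm m) c) := by
    intro m c
    congr 1
    funext p
    exact Function.update_apply_equiv_apply a s m c p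
  simp only [h]
  rw [← Equiv.sum_comp (s : Equiv.Perm (Fin k))
    (fun m => ((Equiv.Perm.sign s : ℤ) : K) *
      ((List.ofFn (Function.update (a ∘ s) (s.symm m) (y * a m - a m * y))).prod).trace)]
  simp only [Equiv.symm_apply_apply]
  rw [← Finset.mul_sum]
  have := inv_trace (a ∘ s) y
  simp only [Function.comp_apply] at this ⊢
  rw [this, mul_zero]

end phi2

lemma val_succAbove' {k : ℕ} (i : Fin (k + 1)) (p : Fin k) :
    ((i.succAbove p : Fin (k + 1)) : ℕ)
      = if (p : ℕ) < (i : ℕ) then (p : ℕ) else (p : ℕ) + 1 := by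
  rw [Fin.succAbove]
  split_ifs with h1 h2 h2
  · rfl
  · exact absurd (by simpa [Fin.lt_def] using h1) h2
  · exact absurd (by simpa [Fin.lt_def] using h2) h1
  · rfl

lemma wfun_idx_lt {k : ℕ} (m : Fin k) (i j : Fin (k + 1)) :
    (if (m : ℕ) - 1 < (i : ℕ) then (m : ℕ) - 1
       else if (m : ℕ) < (j : ℕ) then (m : ℕ) else (m : ℕ) + 1) < k + 1 := by
  have hm := m.isLt; split_ifs <;> omega

def Wfun {α : Type*} [Ring α] {k : ℕ} (x : Fin (k + 1) → α) (i j : Fin (k + 1)) :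
    Fin k → α := fun m =>
  if (m : ℕ) = 0 then x i * x j - x j * x i
  else
    x ⟨if (m : ℕ) - 1 < (i : ℕ) then (m : ℕ) - 1
       else if (m : ℕ) < (j : ℕ) then (m : ℕ) else (m : ℕ) + 1,
      wfun_idx_lt m i j⟩

section claims
variable {α : Type*} [Ring α] {k : ℕ}

lemma claimC_ge (x : Fin (k + 2) → α) (i : Fin (k + 2)) (m : Fin (k + 1))
    (h : (i : ℕ) ≤ (m : ℕ)) :
    Function.update (x ∘ i.succAbove) m
        (x i * x (i.succAbove m) - x (i.succAbove m) * x i)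
      = Wfun x i (i.succAbove m) ∘ (Fin.cycleRange m) := by
  have hj : ((i.succAbove m : Fin (k + 2)) : ℕ) = (m : ℕ) + 1 := by
    rw [val_succAbove', if_neg (by omega)]
  funext p
  rcases lt_trichotomy p m with hpm | hpm | hpm
  · have hpm' : (p : ℕ) < (m : ℕ) := hpm
    rw [Function.comp_apply, Fin.cycleRange_of_lt hpm,
      Function.update_of_ne (Fin.ne_of_lt hpm)]
    have hco : ((p + 1 : Fin (k + 1)) : ℕ) = (p : ℕ) + 1 := by
      rw [Fin.val_add_one_of_lt (lt_of_lt_of_le hpm (Fin.le_last m))]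
    show x (i.succAbove p) = Wfun x i (i.succAbove m) (p + 1)
    rw [Wfun, if_neg (by omega)]
    congr 1
    apply Fin.ext
    rw [val_succAbove']
    simp only [hco, hj]
    split_ifs <;> omega
  · subst hpm
    rw [Function.comp_apply, Fin.cycleRange_self, Function.update_self]
    show _ = Wfun x i (i.succAbove p) 0
    rw [Wfun, if_pos (by simp)]
  · have hpm' : (m : ℕ) < (p : ℕ) := hpm
    rw [Function.comp_apply, Fin.cycleRange_of_gt hpm,
      Function.update_of_ne (Fin.ne_of_gt hpm)]
    show x (i.succAbove p) = Wfun x i (i.succAbove m) p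
    rw [Wfun, if_neg (by omega)]
    congr 1
    apply Fin.ext
    rw [val_succAbove']
    simp only [hj]
    split_ifs <;> omega

lemma claimC_lt (x : Fin (k + 2) → α) (i : Fin (k + 2)) (m : Fin (k + 1))
    (h : (m : ℕ) < (i : ℕ)) :
    Function.update (x ∘ i.succAbove) m
        (x (i.succAbove m) * x i - x i * x (i.succAbove m))
      = Wfun x (i.succAbove m) i ∘ (Fin.cycleRange m) := by
  have hj : ((i.succAbove m : Fin (k + 2)) : ℕ) = (m : ℕ) := by
    rw [val_succAbove', if_pos (by omega)]
  funext p
  rcases lt_trichotomy p m with hpm | hpm | hpm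
  · have hpm' : (p : ℕ) < (m : ℕ) := hpm
    rw [Function.comp_apply, Fin.cycleRange_of_lt hpm,
      Function.update_of_ne (Fin.ne_of_lt hpm)]
    have hco : ((p + 1 : Fin (k + 1)) : ℕ) = (p : ℕ) + 1 := by
      rw [Fin.val_add_one_of_lt (lt_of_lt_of_le hpm (Fin.le_last m))]
    show x (i.succAbove p) = Wfun x (i.succAbove m) i (p + 1)
    rw [Wfun, if_neg (by omega)]
    congr 1
    apply Fin.ext
    rw [val_succAbove']
    simp only [hco, hj]
    split_ifs <;> omega
  · subst hpm
    rw [Function.comp_apply, Fin.cycleRange_self, Function.update_self]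
    show _ = Wfun x (i.succAbove p) i 0
    rw [Wfun, if_pos (by simp)]
  · have hpm' : (m : ℕ) < (p : ℕ) := hpm
    rw [Function.comp_apply, Fin.cycleRange_of_gt hpm,
      Function.update_of_ne (Fin.ne_of_gt hpm)]
    show x (i.succAbove p) = Wfun x (i.succAbove m) i p
    rw [Wfun, if_neg (by omega)]
    congr 1
    apply Fin.ext
    rw [val_succAbove']
    simp only [hj]
    split_ifs <;> omega

end claims

section even
variable {K : Type*} [Field K] [CharZero K] {n : ℕ}
local notation "M" => Matrix (Fin n) (Fin n) K

lemma phi_even {k : ℕ} (hk : Even k) (h2 : 2 ≤ k) (x : Fin k → M) :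
    phiCochain n k x = 0 := by
  obtain ⟨k', rfl⟩ : ∃ k', k = k' + 1 := ⟨k - 1, by omega⟩
  set ρ := finRotate (k' + 1) with hρ
  have hodd : Odd k' := by
    rw [Nat.not_even_iff_odd.symm]
    intro he
    rw [Nat.even_add_one] at hk
    exact hk he
  have hsign : Equiv.Perm.sign ρ = -1 := by
    rw [hρ, sign_finRotate, Nat.add_sub_cancel, Odd.neg_one_pow hodd]
  have key : ∀ s : Equiv.Perm (Fin (k' + 1)),
      ((Equiv.Perm.sign (s * ρ) : ℤ) : K) * ((List.ofFn fun i => x ((s * ρ) i)).prod).trace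
        = -(((Equiv.Perm.sign s : ℤ) : K) * ((List.ofFn fun i => x (s i)).prod).trace) := by
    intro s
    have h1 : (List.ofFn fun i => x ((s * ρ) i))
        = (List.ofFn fun i : Fin k' => x (s i.succ)).concat (x (s 0)) := by
      rw [List.ofFn_succ']
      have e1 : ∀ i : Fin k', (s * ρ) (Fin.castSucc i) = s i.succ := by
        intro i
        show s (ρ (Fin.castSucc i)) = s i.succ
        rw [hρ, finRotate_succ_apply, Fin.coeSucc_eq_succ]
      have e2 : (s * ρ) (Fin.last k') = s 0 := by
        show s (ρ (Fin.last k')) = s 0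
        rw [hρ, finRotate_succ_apply, Fin.last_add_one]
      simp only [e1, e2]
    have h2' : (List.ofFn fun i => x (s i))
        = x (s 0) :: List.ofFn fun i : Fin k' => x (s i.succ) := by
      rw [List.ofFn_succ]
    have hsgn : Equiv.Perm.sign (s * ρ) = -Equiv.Perm.sign s := by
      rw [map_mul, hsign, mul_neg, mul_one]
    rw [h1, h2', List.prod_concat, List.prod_cons, hsgn, Matrix.trace_mul_comm]
    push_cast
    ring
  have hS : phiCochain n (k' + 1) x
      = ∑ s : Equiv.Perm (Fin (k' + 1)),
          ((Equiv.Perm.sign (s * ρ) : ℤ) : K) *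
            ((List.ofFn fun i => x ((s * ρ) i)).prod).trace := by
    unfold phiCochain
    exact (Equiv.sum_comp (Equiv.mulRight ρ)
      (fun s => ((Equiv.Perm.sign s : ℤ) : K) *
        ((List.ofFn fun i => x (s i)).prod).trace)).symm
  rw [Finset.sum_congr rfl (fun s _ => key s), Finset.sum_neg_distrib] at hS
  have h4 : phiCochain n (k' + 1) x = -phiCochain n (k' + 1) x := hS
  have h5 : phiCochain n (k' + 1) x + phiCochain n (k' + 1) x = 0 := by
    nth_rewrite 2 [h4]
    exact add_neg_cancel _
  rw [← two_mul] at h5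
  exact (mul_eq_zero.mp h5).resolve_left two_ne_zero

end even

section main
variable {K : Type*} [Field K] [CharZero K] {n : ℕ}
local notation "M" => Matrix (Fin n) (Fin n) K

lemma main_cocycle (k' : ℕ) (x : Fin (k' + 2) → M) :
    (∑ i : Fin (k' + 2), ∑ j : Fin (k' + 2),
      if (i : ℕ) < (j : ℕ) then
        ((-1 : ℤ) ^ ((i : ℕ) + (j : ℕ))) •
          phiCochain n (k' + 1) (Wfun x i j)
      else 0) = 0 := by
  classical
  set φ : (Fin (k' + 1) → M) → K := phiCochain n (k' + 1) with hφ
  set H : Fin (k' + 2) → Fin (k' + 2) → K := fun i j =>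
    if (i : ℕ) < (j : ℕ) then (-1 : K) ^ ((i : ℕ) + (j : ℕ)) * φ (Wfun x i j)
    else if (j : ℕ) < (i : ℕ) then (-1 : K) ^ ((j : ℕ) + (i : ℕ)) * φ (Wfun x j i)
    else 0 with hH
  -- Step B : per-term identity
  have hB : ∀ (i : Fin (k' + 2)) (m : Fin (k' + 1)),
      H i (i.succAbove m) = -(((-1 : K) ^ (i : ℕ)) *
        φ (Function.update (x ∘ i.succAbove) m
          (x i * x (i.succAbove m) - x (i.succAbove m) * x i))) := by
    intro i m
    rcases le_or_gt (i : ℕ) (m : ℕ) with h | h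
    · have hj : ((i.succAbove m : Fin (k' + 2)) : ℕ) = (m : ℕ) + 1 := by
        rw [val_succAbove', if_neg (by omega)]
      rw [claimC_ge x i m h, hφ, phi_comp_perm, Fin.sign_cycleRange, hH]
      simp only [hj]
      rw [if_pos (by omega)]
      simp only [Units.val_pow_eq_pow_val, Units.val_neg, Units.val_one,
        Int.cast_pow, Int.cast_neg, Int.cast_one]
      ring
    · have hj : ((i.succAbove m : Fin (k' + 2)) : ℕ) = (m : ℕ) := by
        rw [val_succAbove', if_pos (by omega)]
      have hflip := phi_update_neg_flip (x ∘ i.succAbove) m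
        (x i * x (i.succAbove m)) (x (i.succAbove m) * x i)
      rw [hφ, hflip, claimC_lt x i m h, phi_comp_perm, Fin.sign_cycleRange, hH]
      simp only [hj]
      rw [if_neg (by omega), if_pos (by omega)]
      simp only [Units.val_pow_eq_pow_val, Units.val_neg, Units.val_one,
        Int.cast_pow, Int.cast_neg, Int.cast_one]
      ring
  -- Step A : invariance row sums vanish
  have hA : ∀ i : Fin (k' + 2),
      ∑ m : Fin (k' + 1), φ (Function.update (x ∘ i.succAbove) m
        (x i * x (i.succAbove m) - x (i.succAbove m) * x i)) = 0 := by
    intro i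
    have := phi_inv (x ∘ i.succAbove) (x i)
    simpa only [Function.comp_apply, hφ] using this
  -- Step C : every row of H sums to zero
  have hC : ∑ i : Fin (k' + 2), ∑ j : Fin (k' + 2), H i j = 0 := by
    refine Finset.sum_eq_zero fun i _ => ?_
    have e1 : ∑ j : Fin (k' + 2), H i j
        = H i i + ∑ m : Fin (k' + 1), H i (i.succAbove m) :=
      Fin.sum_univ_succAbove (fun j => H i j) i
    have eii : H i i = 0 := by rw [hH]; simp
    rw [e1, eii, zero_add, Finset.sum_congr rfl (fun m _ => hB i m),
      Finset.sum_neg_distrib, ← Finset.mul_sum, hA i, mul_zero, neg_zero]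
  -- Step D : the double sum is twice the target
  have hsplit : ∀ i j : Fin (k' + 2), H i j
      = (if (i : ℕ) < (j : ℕ) then (-1 : K) ^ ((i : ℕ) + (j : ℕ)) * φ (Wfun x i j) else 0)
        + (if (j : ℕ) < (i : ℕ) then (-1 : K) ^ ((j : ℕ) + (i : ℕ)) * φ (Wfun x j i) else 0) := by
    intro i j
    simp only [hH]
    split_ifs <;> first | (exfalso; omega) | ring
  have hswap : (∑ i : Fin (k' + 2), ∑ j : Fin (k' + 2),
        if (j : ℕ) < (i : ℕ) then (-1 : K) ^ ((j : ℕ) + (i : ℕ)) * φ (Wfun x j i) else 0)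
      = ∑ i : Fin (k' + 2), ∑ j : Fin (k' + 2),
        if (i : ℕ) < (j : ℕ) then (-1 : K) ^ ((i : ℕ) + (j : ℕ)) * φ (Wfun x i j) else 0 :=
    Finset.sum_comm
  have htwo : ∑ i : Fin (k' + 2), ∑ j : Fin (k' + 2), H i j
      = 2 * ∑ i : Fin (k' + 2), ∑ j : Fin (k' + 2),
          (if (i : ℕ) < (j : ℕ) then (-1 : K) ^ ((i : ℕ) + (j : ℕ)) * φ (Wfun x i j) else 0) := by
    rw [Finset.sum_congr rfl (fun i _ => Finset.sum_congr rfl (fun j _ => hsplit i j))]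
    simp only [Finset.sum_add_distrib]
    rw [hswap]
    ring
  have hfinal : (∑ i : Fin (k' + 2), ∑ j : Fin (k' + 2),
      (if (i : ℕ) < (j : ℕ) then (-1 : K) ^ ((i : ℕ) + (j : ℕ)) * φ (Wfun x i j) else 0)) = 0 := by
    have := hC
    rw [htwo] at this
    exact (mul_eq_zero.mp this).resolve_left two_ne_zero
  refine Eq.trans ?_ hfinal
  refine Finset.sum_congr rfl fun i _ => Finset.sum_congr rfl fun j _ => ?_
  split_ifs with h
  · rw [zsmul_eq_mul]
    push_cast
    ring
  · rfl

end main

theorem phi_even_vanishes_and_odd_is_cocycle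
    (K : Type*) [Field K] [CharZero K] (n k : ℕ) :
    (Even k → 2 ≤ k → ∀ x : Fin k → Matrix (Fin n) (Fin n) K, phiCochain n k x = 0)
    ∧ (Odd k → ∀ x : Fin (k + 1) → Matrix (Fin n) (Fin n) K,
        (∑ i : Fin (k + 1), ∑ j : Fin (k + 1),
          if (i : ℕ) < (j : ℕ) then
            ((-1 : ℤ) ^ ((i : ℕ) + (j : ℕ))) •
              phiCochain n k (fun m : Fin k =>
                if (m : ℕ) = 0 then x i * x j - x j * x i
                else
                  x ⟨if (m : ℕ) - 1 < (i : ℕ) then (m : ℕ) - 1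
                     else if (m : ℕ) < (j : ℕ) then (m : ℕ) else (m : ℕ) + 1,
                    by have hm := m.isLt; split_ifs <;> omega⟩)
          else 0) = 0) := by
  constructor
  · intro hk h2 x
    exact phi_even hk h2 x
  · intro _ x
    cases k with
    | zero =>
      refine Finset.sum_eq_zero fun i _ => Finset.sum_eq_zero fun j _ => ?_
      rw [if_neg]
      have hi := i.isLt
      have hj := j.isLt
      omega
    | succ k' =>
      exact main_cocycle k' x
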